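/- (Measurement-error upper bound under monotonicity) Under the same measurement-error model with monotone misclassification, π_1 − π_0 ≤ 2·P(Y2=0 ∣ X=0) − 2·P(Y2=0 ∣ X=1) + 1. -/

import Mathlib

open Finset

/-- Measurement-error upper bound under monotone misclassification: with binary
exposure `X` independent of the response-function pair `(R_Y, R_{Y2})`,
unobserved true outcome `Y = f_Y(X, R_Y)`, observed outcome `Y2 = f_{Y2}(Y, R_{Y2})`,
and the anti-monotone response pattern for `Y2` excluded with probability one,
the causal risk difference satisfies
`π₁ − π₀ ≤ 2·P(Y2=0 ∣ X=0) − 2·P(Y2=0 ∣ X=1) + 1`. -/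
theorem measurement_error_upper_bound
    (RY RY2 : Type) [Fintype RY] [Fintype RY2]
    (ν : Bool → RY → RY2 → ℝ)
    (hnn : ∀ x rY rY2, 0 ≤ ν x rY rY2)
    (hsum : ∑ x : Bool, ∑ rY : RY, ∑ rY2 : RY2, ν x rY rY2 = 1)
    (hind : ∀ x rY rY2, ν x rY rY2 =
      (∑ rY' : RY, ∑ rY2' : RY2, ν x rY' rY2') * (∑ x' : Bool, ν x' rY rY2))
    (fY : Bool → RY → Bool) (fY2 : Bool → RY2 → Bool)
    (hmono : ∀ rY2 : RY2,
      0 < ∑ x : Bool, ∑ rY : RY, ν x rY rY2 →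
      (fY2 false rY2 = true → fY2 true rY2 = true))
    (pX : Bool → ℝ)
    (hpX : ∀ x, pX x = ∑ rY : RY, ∑ rY2 : RY2, ν x rY rY2)
    (hpXpos : ∀ x, 0 < pX x)
    (π : Bool → ℝ)
    (hπ : ∀ x, π x = ∑ x' : Bool, ∑ rY : RY, ∑ rY2 : RY2,
      (if fY x rY = true then ν x' rY rY2 else 0))
    (condY2zero : Bool → ℝ)
    (hcond : ∀ x, condY2zero x =
      (∑ rY : RY, ∑ rY2 : RY2,
        (if fY2 (fY x rY) rY2 = false then ν x rY rY2 else 0)) / pX x) :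
    π true - π false ≤ 2 * condY2zero false - 2 * condY2zero true + 1 := by
  set μ : RY → RY2 → ℝ := fun rY rY2 => ∑ x : Bool, ν x rY rY2 with hμdef
  have hμnn : ∀ rY rY2, 0 ≤ μ rY rY2 := fun rY rY2 =>
    Finset.sum_nonneg fun x _ => hnn x rY rY2
  have hμsum : ∑ rY : RY, ∑ rY2 : RY2, μ rY rY2 = 1 := by
    rw [← hsum]
    simp only [hμdef]
    rw [show (∑ rY : RY, ∑ rY2 : RY2, ∑ x : Bool, ν x rY rY2)
        = ∑ rY : RY, ∑ x : Bool, ∑ rY2 : RY2, ν x rY rY2 from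
      Finset.sum_congr rfl fun rY _ => Finset.sum_comm, Finset.sum_comm]
  have hπ' : ∀ x, π x = ∑ rY : RY, ∑ rY2 : RY2,
      (if fY x rY = true then μ rY rY2 else 0) := by
    intro x
    rw [hπ x, Finset.sum_comm]
    refine Finset.sum_congr rfl fun rY _ => ?_
    rw [Finset.sum_comm]
    refine Finset.sum_congr rfl fun rY2 _ => ?_
    by_cases h : fY x rY = true <;> simp [h, hμdef]
  have hcond' : ∀ x, condY2zero x = ∑ rY : RY, ∑ rY2 : RY2,
      (if fY2 (fY x rY) rY2 = false then μ rY rY2 else 0) := by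
    intro x
    rw [hcond x]
    have hnum : (∑ rY : RY, ∑ rY2 : RY2,
        (if fY2 (fY x rY) rY2 = false then ν x rY rY2 else 0))
        = pX x * ∑ rY : RY, ∑ rY2 : RY2,
          (if fY2 (fY x rY) rY2 = false then μ rY rY2 else 0) := by
      rw [Finset.mul_sum]
      refine Finset.sum_congr rfl fun rY _ => ?_
      rw [Finset.mul_sum]
      refine Finset.sum_congr rfl fun rY2 _ => ?_
      rw [hind x rY rY2, ← hpX x]
      by_cases h : fY2 (fY x rY) rY2 = false <;> simp [h, hμdef]
    rw [hnum, mul_div_assoc, mul_comm,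
      div_mul_cancel₀ _ (ne_of_gt (hpXpos x))]
  have key : ∀ rY rY2,
      (if fY true rY = true then μ rY rY2 else 0)
        - (if fY false rY = true then μ rY rY2 else 0)
      ≤ 2 * (if fY2 (fY false rY) rY2 = false then μ rY rY2 else 0)
        - 2 * (if fY2 (fY true rY) rY2 = false then μ rY rY2 else 0)
        + μ rY rY2 := by
    intro rY rY2
    by_cases hpos : 0 < μ rY rY2
    · have hle : μ rY rY2 ≤ ∑ x : Bool, ∑ rY' : RY, ν x rY' rY2 := by
        refine Finset.sum_le_sum fun x _ => ?_
        exact Finset.single_le_sum (fun i _ => hnn x i rY2) (Finset.mem_univ rY)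
      have hm := hmono rY2 (lt_of_lt_of_le hpos hle)
      cases h1 : fY true rY <;> cases h2 : fY false rY <;>
        cases h3 : fY2 true rY2 <;> cases h4 : fY2 false rY2 <;>
        simp [h1, h2, h3, h4] <;>
        first
          | linarith [hμnn rY rY2]
          | (exfalso; rw [hm h4] at h3; exact Bool.noConfusion h3)
    · have h0 : μ rY rY2 = 0 := le_antisymm (not_lt.mp hpos) (hμnn rY rY2)
      split_ifs <;> simp [h0]
  calc π true - π false
      = ∑ rY : RY, ∑ rY2 : RY2,
        ((if fY true rY = true then μ rY rY2 else 0)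
          - (if fY false rY = true then μ rY rY2 else 0)) := by
        rw [hπ' true, hπ' false, ← Finset.sum_sub_distrib]
        exact Finset.sum_congr rfl fun rY _ => (Finset.sum_sub_distrib _ _).symm
    _ ≤ ∑ rY : RY, ∑ rY2 : RY2,
        (2 * (if fY2 (fY false rY) rY2 = false then μ rY rY2 else 0)
          - 2 * (if fY2 (fY true rY) rY2 = false then μ rY rY2 else 0)
          + μ rY rY2) := by
        refine Finset.sum_le_sum fun rY _ => Finset.sum_le_sum fun rY2 _ => key rY rY2
    _ = 2 * condY2zero false - 2 * condY2zero true + 1 := by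
        rw [hcond' false, hcond' true, ← hμsum]
        simp only [Finset.sum_add_distrib, Finset.sum_sub_distrib, Finset.mul_sum]
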